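/- arXiv:1310.4383 — 4 statements merged into one kernel-verified Lean document; each statement's English description precedes it below -/
import Mathlib

section
/- For all finite simple graphs T, H, G, there is a bijection between Hom(T □ H, G) and Hom(H, ψ_T(G)); in particular |Hom(T □ H, G)| = |Hom(H, ψ_T(G))|. -/
/-- For graphs `T` and `G`, `ψ_T(G)` is the graph whose vertices are the
homomorphisms `h : T → G`, with `h₁` adjacent to `h₂` iff `h₁(v) ~ h₂(v)` in `G`
for every vertex `v` of `T`. (We require `T` to have at least one vertex so that
the adjacency relation is irreflexive.) -/
def psiGraph {VT W : Type} [Nonempty VT] (T : SimpleGraph VT) (G : SimpleGraph W) :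
    SimpleGraph (T →g G) where
  Adj h₁ h₂ := ∀ v : VT, G.Adj (h₁ v) (h₂ v)
  symm := by
    constructor
    intro a b h v
    exact (h v).symm
  loopless := by
    constructor
    intro a h
    exact (h (Classical.arbitrary VT)).ne rfl

def curryHom {VT VH W : Type} [Nonempty VT] (T : SimpleGraph VT) (H : SimpleGraph VH)
    (G : SimpleGraph W) (f : T.boxProd H →g G) : H →g psiGraph T G where
  toFun y := { toFun := fun x => f (x, y)
               map_rel' := fun h => f.map_rel' (by simp [SimpleGraph.boxProd_adj, h]) }
  map_rel' := fun h x => f.map_rel' (by simp [SimpleGraph.boxProd_adj, h])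

def uncurryHom {VT VH W : Type} [Nonempty VT] (T : SimpleGraph VT) (H : SimpleGraph VH)
    (G : SimpleGraph W) (g : H →g psiGraph T G) : T.boxProd H →g G where
  toFun p := g p.2 p.1
  map_rel' := by
    rintro ⟨a, b⟩ ⟨c, d⟩ h
    rcases SimpleGraph.boxProd_adj.1 h with ⟨h1, rfl⟩ | ⟨h2, rfl⟩
    · exact (g b).map_rel' h1
    · exact g.map_rel' h2 a

/-- for all finite simple graphs `T`, `H`, `G` there is a bijection
between `Hom(T □ H, G)` and `Hom(H, ψ_T(G))`; in particular the two sets have the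
same cardinality. -/
theorem boxProd_hom_equiv (VT VH W : Type) [Fintype VT] [Fintype VH] [Fintype W]
    [Nonempty VT] (T : SimpleGraph VT) (H : SimpleGraph VH) (G : SimpleGraph W) :
    Nonempty ((T.boxProd H →g G) ≃ (H →g psiGraph T G)) ∧
      Nat.card (T.boxProd H →g G) = Nat.card (H →g psiGraph T G) := by
  have e : (T.boxProd H →g G) ≃ (H →g psiGraph T G) :=
    { toFun := curryHom T H G
      invFun := uncurryHom T H G
      left_inv := fun f => by ext ⟨a, b⟩; rfl
      right_inv := fun g => by ext y x; rfl }
  exact ⟨⟨e⟩, Nat.card_congr e⟩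
end

section
/- A bipartite graph H (without isolated vertices in the relevant sense) has Sidorenko's property if and only if t_H(G) ≥ t_{K_2}(G)^{|E(H)|} holds for all graphs G whose maximum degree is at most 4|E(G)|/|V(G)|. -/
open SimpleGraph

set_option linter.unusedVariables false
set_option linter.unusedSectionVars false

noncomputable section SidorenkoAux


private lemma dart_nat_card {W : Type} [Fintype W] (G : SimpleGraph W) :
    Nat.card G.Dart = 2 * Nat.card G.edgeSet := by
  classical
  rw [Nat.card_eq_fintype_card, Nat.card_eq_fintype_card, G.dart_card_eq_twice_card_edges,
    edgeFinset, Set.toFinset_card]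

/-- tensor power of a graph, with `k+1` factors -/
private def tpow {W : Type} (G : SimpleGraph W) (k : ℕ) : SimpleGraph (Fin (k+1) → W) where
  Adj f g := ∀ i, G.Adj (f i) (g i)
  symm := ⟨fun f g h i => (h i).symm⟩
  loopless := ⟨fun f h => G.irrefl (h 0)⟩

private def tpowDartEquiv {W : Type} (G : SimpleGraph W) (k : ℕ) :
    (tpow G k).Dart ≃ (Fin (k+1) → G.Dart) where
  toFun d i := ⟨(d.toProd.1 i, d.toProd.2 i), d.adj i⟩
  invFun F := ⟨(fun i => (F i).toProd.1, fun i => (F i).toProd.2), fun i => (F i).adj⟩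
  left_inv d := rfl
  right_inv F := rfl

private def tpowHomEquiv {VH W : Type} (H : SimpleGraph VH) (G : SimpleGraph W) (k : ℕ) :
    (H →g tpow G k) ≃ (Fin (k+1) → (H →g G)) where
  toFun φ i := ⟨fun a => φ a i, fun hab => (φ.map_rel hab) i⟩
  invFun F := ⟨fun a i => F i a, fun hab i => (F i).map_rel hab⟩
  left_inv φ := rfl
  right_inv F := rfl

private lemma tpow_hom_card {VH W : Type} (H : SimpleGraph VH) (G : SimpleGraph W) (k : ℕ) :
    Nat.card (H →g tpow G k) = (Nat.card (H →g G)) ^ (k+1) := by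
  rw [Nat.card_congr (tpowHomEquiv H G k), Nat.card_pi]
  simp

private lemma tpow_dart_card {W : Type} [Fintype W] (G : SimpleGraph W) (k : ℕ) :
    2 * Nat.card (tpow G k).edgeSet = (2 * Nat.card G.edgeSet) ^ (k+1) := by
  rw [← dart_nat_card, ← dart_nat_card, Nat.card_congr (tpowDartEquiv G k), Nat.card_pi]
  simp



variable {W : Type} [Fintype W] (G : SimpleGraph W)

private def nd (v : W) : ℕ := Nat.card (G.neighborSet v)

private def parts (t : ℕ) (v : W) : ℕ := (nd G v + t - 1) / t

private def idx (v : W) : G.neighborSet v ≃ Fin (nd G v) :=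
  Finite.equivFinOfCardEq rfl

private def cc (t : ℕ) (v u : W) (h : G.Adj v u) : ℕ := (idx G v ⟨u, h⟩ : ℕ) / t

private lemma nd_pos {v u : W} (h : G.Adj v u) : 0 < nd G v := by
  have : Nonempty (G.neighborSet v) := ⟨⟨u, h⟩⟩
  exact Nat.card_pos

private lemma cc_lt {t : ℕ} (ht : 0 < t) {v u : W} (h : G.Adj v u) :
    cc G t v u h < parts G t v := by
  have h1 : (idx G v ⟨u, h⟩ : ℕ) < nd G v := (idx G v ⟨u, h⟩).isLt
  have h2 : 1 ≤ nd G v := nd_pos G h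
  have h3 : cc G t v u h ≤ (nd G v - 1) / t :=
    Nat.div_le_div_right (by omega)
  have h4 : (nd G v - 1) / t < ((nd G v - 1) + t) / t := by
    rw [Nat.add_div_right _ ht]; omega
  have h5 : (nd G v - 1) + t = nd G v + t - 1 := by omega
  rw [h5] at h4
  exact lt_of_le_of_lt h3 h4

private def split (t : ℕ) : SimpleGraph (Σ v : W, Fin (parts G t v)) where
  Adj a b := ∃ h : G.Adj a.1 b.1,
    cc G t a.1 b.1 h = a.2.val ∧ cc G t b.1 a.1 h.symm = b.2.val
  symm := by
    constructor
    rintro a b ⟨h, h1, h2⟩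
    exact ⟨h.symm, h2, h1⟩
  loopless := by
    constructor
    rintro a ⟨h, -, -⟩
    exact G.irrefl h

private def splitDartEquiv {t : ℕ} (ht : 0 < t) : (split G t).Dart ≃ G.Dart where
  toFun d := ⟨(d.toProd.1.1, d.toProd.2.1), d.adj.choose⟩
  invFun d := ⟨(⟨d.toProd.1, ⟨cc G t d.toProd.1 d.toProd.2 d.adj, cc_lt G ht d.adj⟩⟩,
                ⟨d.toProd.2, ⟨cc G t d.toProd.2 d.toProd.1 d.adj.symm, cc_lt G ht d.adj.symm⟩⟩),
    ⟨d.adj, rfl, rfl⟩⟩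
  left_inv := by
    rintro ⟨⟨⟨v, i⟩, ⟨u, j⟩⟩, hadj⟩
    obtain ⟨h, h1, h2⟩ := hadj
    apply Dart.ext
    dsimp only
    ext
    · rfl
    · exact heq_of_eq (Fin.ext h1)
    · rfl
    · exact heq_of_eq (Fin.ext h2)
  right_inv d := rfl

private lemma split_edge_card {t : ℕ} (ht : 0 < t) :
    Nat.card (split G t).edgeSet = Nat.card G.edgeSet := by
  classical
  have h1 : Nat.card (split G t).Dart = Nat.card G.Dart :=
    Nat.card_congr (splitDartEquiv G ht)
  have h2 : Nat.card (split G t).Dart = 2 * Nat.card (split G t).edgeSet := by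
    rw [Nat.card_eq_fintype_card, Nat.card_eq_fintype_card,
      (split G t).dart_card_eq_twice_card_edges, edgeFinset, Set.toFinset_card]
  have h3 : Nat.card G.Dart = 2 * Nat.card G.edgeSet := by
    rw [Nat.card_eq_fintype_card, Nat.card_eq_fintype_card,
      G.dart_card_eq_twice_card_edges, edgeFinset, Set.toFinset_card]
  omega



section More
variable {W : Type} [Fintype W] (G : SimpleGraph W)

private lemma cc_congr {t : ℕ} {v v' u u' : W} (hv : v = v') (hu : u = u')
    (h : G.Adj v u) (h' : G.Adj v' u') : cc G t v u h = cc G t v' u' h' := by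
  subst hv; subst hu; rfl

private lemma split_degree_le {t : ℕ} (ht : 0 < t) (a : Σ v : W, Fin (parts G t v)) :
    Nat.card ((split G t).neighborSet a) ≤ t := by
  refine le_trans (Nat.card_le_card_of_injective
    (f := fun b : (split G t).neighborSet a =>
      (⟨(idx G a.1 ⟨b.1.1, b.2.choose⟩ : ℕ) % t, Nat.mod_lt _ ht⟩ : Fin t)) ?_) (by simp)
  rintro ⟨⟨u, j⟩, hx⟩ ⟨⟨u', j'⟩, hy⟩ hxy
  obtain ⟨hx1, hx2⟩ := hx.choose_spec
  obtain ⟨hy1, hy2⟩ := hy.choose_spec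
  have hmod : (idx G a.1 ⟨u, hx.choose⟩ : ℕ) % t = (idx G a.1 ⟨u', hy.choose⟩ : ℕ) % t := by
    simpa using congrArg Fin.val hxy
  have hdivx : (idx G a.1 ⟨u, hx.choose⟩ : ℕ) / t = a.2.val := hx1
  have hdivy : (idx G a.1 ⟨u', hy.choose⟩ : ℕ) / t = a.2.val := hy1
  have hn : (idx G a.1 ⟨u, hx.choose⟩ : ℕ) = (idx G a.1 ⟨u', hy.choose⟩ : ℕ) := by
    conv_lhs => rw [← Nat.div_add_mod (idx G a.1 ⟨u, hx.choose⟩ : ℕ) t]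
    conv_rhs => rw [← Nat.div_add_mod (idx G a.1 ⟨u', hy.choose⟩ : ℕ) t]
    rw [hmod, hdivx, hdivy]
  have hsub : (⟨u, hx.choose⟩ : G.neighborSet a.1) = ⟨u', hy.choose⟩ :=
    (idx G a.1).injective (Fin.ext hn)
  have hu : u = u' := congrArg Subtype.val hsub
  apply Subtype.ext
  dsimp only
  refine Sigma.ext hu ((Fin.heq_ext_iff (congrArg (parts G t) hu)).mpr ?_)
  rw [← hx2, ← hy2]
  exact cc_congr G hu rfl _ _

private def splitProj (t : ℕ) : split G t →g G where
  toFun a := a.1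
  map_rel' h := h.choose

private lemma hom_card_split_le {VH : Type} [Fintype VH] (H : SimpleGraph VH)
    (hiso : ∀ a : VH, ∃ b : VH, H.Adj a b) (t : ℕ) :
    Nat.card (H →g split G t) ≤ Nat.card (H →g G) := by
  have hfin : Finite (H →g G) := by
    classical
    exact Finite.of_injective (fun f => (f : VH → W)) DFunLike.coe_injective
  apply Nat.card_le_card_of_injective (fun g => (splitProj G t).comp g)
  intro g₁ g₂ hg
  apply DFunLike.ext
  intro a
  obtain ⟨b, hab⟩ := hiso a
  have e1 : (g₁ a).1 = (g₂ a).1 := DFunLike.congr_fun hg a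
  have e2 : (g₁ b).1 = (g₂ b).1 := DFunLike.congr_fun hg b
  obtain ⟨h₁, h1a, h1b⟩ := g₁.map_rel hab
  obtain ⟨h₂, h2a, h2b⟩ := g₂.map_rel hab
  refine Sigma.ext e1 ((Fin.heq_ext_iff (congrArg (parts G t) e1)).mpr ?_)
  rw [← h1a, ← h2a]
  exact cc_congr G e1 e2 _ _

end More

section Numeric
variable {W : Type} [Fintype W] (G : SimpleGraph W)

private lemma parts_eq_zero {t : ℕ} (ht : 0 < t) {v : W} (h : nd G v = 0) :
    parts G t v = 0 := by
  unfold parts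
  rw [h]
  exact Nat.div_eq_of_lt (by omega)

private lemma parts_pos {t : ℕ} (ht : 0 < t) {v : W} (h : 0 < nd G v) :
    0 < parts G t v := by
  unfold parts
  exact Nat.div_pos (by omega) ht

private lemma sum_nd : ∑ v : W, nd G v = 2 * Nat.card G.edgeSet := by
  classical
  have h1 : ∀ v, nd G v = G.degree v := fun v => by
    rw [nd, Nat.card_eq_fintype_card, card_neighborSet_eq_degree]
  simp only [h1]
  rw [G.sum_degrees_eq_twice_card_edges, edgeFinset, Set.toFinset_card,
    Nat.card_eq_fintype_card]

end Numeric

section Numeric2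
variable {W : Type} [Fintype W] (G : SimpleGraph W)

private lemma split_numeric (hE : 1 ≤ Nat.card G.edgeSet) :
    ∃ t : ℕ, 0 < t ∧
      0 < Fintype.card (Σ v : W, Fin (parts G t v)) ∧
      Fintype.card (Σ v : W, Fin (parts G t v)) ≤ 2 * Fintype.card W ∧
      t * Fintype.card (Σ v : W, Fin (parts G t v)) ≤ 4 * Nat.card G.edgeSet := by
  classical
  set E := Nat.card G.edgeSet with hE'
  set P : Finset W := Finset.univ.filter (fun v => 0 < nd G v) with hP
  set p := P.card with hp
  have hsum : ∑ v ∈ P, nd G v = 2 * E := by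
    rw [hP, Finset.sum_filter_of_ne, sum_nd]
    intro v _ h
    omega
  have hppos : 0 < p := by
    by_contra h
    have h0 : P = ∅ := Finset.card_eq_zero.mp (by omega)
    rw [h0] at hsum
    simp at hsum
    omega
  have hple : p ≤ 2 * E := by
    calc p = ∑ _v ∈ P, 1 := by simp [hp]
    _ ≤ ∑ v ∈ P, nd G v := Finset.sum_le_sum (fun v hv => by
        simp only [hP, Finset.mem_filter] at hv; omega)
    _ = 2 * E := hsum
  set t := (2 * E + p - 1) / p with htdef
  have htp1 : p * t ≤ 2 * E + p - 1 := Nat.mul_div_le _ _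
  have htp2 : 2 * E ≤ p * t := by
    have h1 := Nat.div_add_mod (2 * E + p - 1) p
    have h2 := Nat.mod_lt (2 * E + p - 1) hppos
    rw [← htdef] at h1
    omega
  have ht : 0 < t := by
    rcases Nat.eq_zero_or_pos t with h | h
    · rw [h, Nat.mul_zero] at htp2; omega
    · exact h
  have hcard : Fintype.card (Σ v : W, Fin (parts G t v)) = ∑ v : W, parts G t v := by
    rw [Fintype.card_sigma]
    simp
  have hfilter : ∑ v : W, t * parts G t v = ∑ v ∈ P, t * parts G t v := by
    rw [hP]
    refine (Finset.sum_filter_of_ne ?_).symm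
    intro v _ h
    rcases Nat.eq_zero_or_pos (nd G v) with h0 | h0
    · exact absurd (by rw [parts_eq_zero G ht h0, Nat.mul_zero]) h
    · exact h0
  have key1 : ∑ v ∈ P, t * parts G t v ≤ 2 * E + p * t - p := by
    calc ∑ v ∈ P, t * parts G t v ≤ ∑ v ∈ P, (nd G v + (t - 1)) :=
        Finset.sum_le_sum (fun v _ => by
          have := Nat.mul_div_le (nd G v + t - 1) t
          unfold parts
          omega)
    _ = 2 * E + p * (t - 1) := by
        rw [Finset.sum_add_distrib, hsum, Finset.sum_const, smul_eq_mul]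
    _ = 2 * E + p * t - p := by
        have : p * (t - 1) = p * t - p := by
          rw [Nat.mul_sub_one]
        omega
  have keyS : t * (∑ v : W, parts G t v) ≤ 2 * E + p * t - p := by
    rw [Finset.mul_sum, hfilter]
    exact key1
  have hpw : p ≤ Fintype.card W := Finset.card_le_univ P
  refine ⟨t, ht, ?_, ?_, ?_⟩
  · -- positivity
    rw [hcard]
    obtain ⟨v, hv⟩ := Finset.card_pos.mp hppos
    simp only [hP, Finset.mem_filter] at hv
    exact lt_of_lt_of_le (parts_pos G ht hv.2) (Finset.single_le_sum
      (fun i _ => Nat.zero_le _) (Finset.mem_univ v))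
  · -- ≤ 2w
    rw [hcard]
    have h1 : t * (∑ v : W, parts G t v) ≤ t * (2 * Fintype.card W) := by
      have h2 : p * t ≤ Fintype.card W * t := Nat.mul_le_mul_right t hpw
      calc t * (∑ v : W, parts G t v) ≤ 2 * E + p * t - p := keyS
      _ ≤ 2 * (p * t) := by omega
      _ ≤ 2 * (Fintype.card W * t) := by omega
      _ = t * (2 * Fintype.card W) := by ring
    exact Nat.le_of_mul_le_mul_left h1 ht
  · -- t * card ≤ 4E
    rw [hcard]
    calc t * (∑ v : W, parts G t v) ≤ 2 * E + p * t - p := keyS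
    _ ≤ 4 * E := by omega

end Numeric2

section LemA

private lemma lemA {VH : Type} [Fintype VH] (H : SimpleGraph VH)
    (hiso : ∀ a : VH, ∃ b : VH, H.Adj a b)
    (hme : Fintype.card VH ≤ 2 * Nat.card H.edgeSet)
    (hyp : ∀ (W : Type) [Fintype W] [Nonempty W] (G : SimpleGraph W),
      (∀ v : W, (Nat.card (G.neighborSet v) : ℝ) ≤
          4 * (Nat.card G.edgeSet : ℝ) / (Fintype.card W : ℝ)) →
      (Nat.card (H →g G) : ℝ) / (Fintype.card W : ℝ) ^ (Fintype.card VH) ≥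
        (2 * (Nat.card G.edgeSet : ℝ) / (Fintype.card W : ℝ) ^ 2) ^
          (Nat.card H.edgeSet))
    {W : Type} [Fintype W] [Nonempty W] (G : SimpleGraph W)
    (hE : 1 ≤ Nat.card G.edgeSet) :
    (2 * (Nat.card G.edgeSet : ℝ)) ^ (Nat.card H.edgeSet) ≤
      (Nat.card (H →g G) : ℝ) *
        (2 * (Fintype.card W : ℝ)) ^ (2 * Nat.card H.edgeSet - Fintype.card VH) := by
  classical
  obtain ⟨t, ht, hpos, h2w, h4E⟩ := split_numeric G hE
  haveI : Nonempty (Σ v : W, Fin (parts G t v)) := Fintype.card_pos_iff.mp hpos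
  set m := Fintype.card VH with hm
  set e := Nat.card H.edgeSet with he
  set w' := Fintype.card (Σ v : W, Fin (parts G t v)) with hw'
  set E := Nat.card G.edgeSet with hEdef
  have hE' : Nat.card (split G t).edgeSet = E := split_edge_card G ht
  have hdeg : ∀ v : Σ v : W, Fin (parts G t v),
      (Nat.card ((split G t).neighborSet v) : ℝ) ≤
        4 * (Nat.card (split G t).edgeSet : ℝ) / (w' : ℝ) := by
    intro v
    rw [hE', le_div_iff₀ (by exact_mod_cast hpos)]
    have h1 : Nat.card ((split G t).neighborSet v) * w' ≤ t * w' :=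
      Nat.mul_le_mul_right _ (split_degree_le G ht v)
    have h2 : Nat.card ((split G t).neighborSet v) * w' ≤ 4 * E := le_trans h1 h4E
    exact_mod_cast h2
  have key := hyp _ (split G t) hdeg
  rw [hE'] at key
  rw [← hw'] at key
  -- key : homG' / w'^m ≥ (2E/w'^2)^e
  set A := (Nat.card (H →g split G t) : ℝ) with hA
  have hx' : (0:ℝ) < (w' : ℝ) := by exact_mod_cast hpos
  have hA0 : 0 ≤ A := by positivity
  have step1 : (2 * (E:ℝ)) ^ e ≤ A * (w' : ℝ) ^ (2 * e - m) := by
    have h1 : (2 * (E:ℝ) / (w':ℝ) ^ 2) ^ e = (2 * (E:ℝ)) ^ e / (w':ℝ) ^ (2 * e) := by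
      rw [div_pow, ← pow_mul]
    rw [ge_iff_le, h1, div_le_div_iff₀ (by positivity) (by positivity)] at key
    -- key : (2E)^e * w'^m ≤ A * w'^(2e)
    have h2 : (w':ℝ) ^ (2 * e) = (w':ℝ) ^ (2 * e - m) * (w':ℝ) ^ m := by
      rw [← pow_add, Nat.sub_add_cancel hme]
    rw [h2, ← mul_assoc] at key
    exact le_of_mul_le_mul_right key (by positivity)
  have hAle : A ≤ (Nat.card (H →g G) : ℝ) := by
    rw [hA]
    exact_mod_cast hom_card_split_le G H hiso t
  have hwle : ((w' : ℝ)) ^ (2 * e - m) ≤ (2 * (Fintype.card W : ℝ)) ^ (2 * e - m) := by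
    apply pow_le_pow_left₀ (le_of_lt hx')
    exact_mod_cast h2w
  calc (2 * (E:ℝ)) ^ e ≤ A * (w' : ℝ) ^ (2 * e - m) := step1
  _ ≤ (Nat.card (H →g G) : ℝ) * (2 * (Fintype.card W : ℝ)) ^ (2 * e - m) := by
      apply mul_le_mul hAle hwle (by positivity) (by positivity)

end LemA

private lemma pow_limit {x y C : ℝ} (hx : 0 ≤ x) (hC : 0 < C)
    (h : ∀ k : ℕ, y ^ (k+1) ≤ C * x ^ (k+1)) : y ≤ x := by
  by_contra hlt
  push_neg at hlt
  have hy : 0 < y := lt_of_le_of_lt hx hlt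
  set r := x / y with hr
  have hr0 : 0 ≤ r := div_nonneg hx hy.le
  have hr1 : r < 1 := (div_lt_one hy).mpr hlt
  have h' : ∀ k : ℕ, 1 ≤ C * r ^ (k+1) := by
    intro k
    have h2 : (0:ℝ) < y ^ (k+1) := pow_pos hy _
    calc (1:ℝ) ≤ (C * x ^ (k+1)) / y ^ (k+1) := (one_le_div h2).mpr (h k)
    _ = C * r ^ (k+1) := by rw [hr, div_pow, mul_div_assoc]
  obtain ⟨n, hn⟩ := exists_pow_lt_of_lt_one (show (0:ℝ) < 1/C by positivity) hr1
  have hrn : (0:ℝ) ≤ r ^ n := pow_nonneg hr0 n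
  have hmono : r ^ (n+1) ≤ r ^ n := by
    calc r ^ (n+1) = r ^ n * r := pow_succ r n
    _ ≤ r ^ n * 1 := by nlinarith
    _ = r ^ n := mul_one _
  have hcontr : C * r ^ (n+1) < 1 := by
    calc C * r ^ (n+1) ≤ C * r ^ n := by nlinarith
    _ < C * (1/C) := by nlinarith
    _ = 1 := by field_simp
  linarith [h' n]

end SidorenkoAux

/-- a bipartite graph `H` with no isolated vertices has Sidorenko's
property if and only if `t_H(G) ≥ t_{K_2}(G)^{|E(H)|}` holds for all graphs `G`
whose maximum degree is at most `4|E(G)|/|V(G)|`. -/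
theorem sidorenko_iff_bounded_maxDegree (VH : Type) [Fintype VH]
    (H : SimpleGraph VH) (hbip : H.Colorable 2)
    (hiso : ∀ v : VH, ∃ w : VH, H.Adj v w) :
    (∀ (W : Type) [Fintype W] [Nonempty W] (G : SimpleGraph W),
      (Nat.card (H →g G) : ℝ) / (Fintype.card W : ℝ) ^ (Fintype.card VH) ≥
        (2 * (Nat.card G.edgeSet : ℝ) / (Fintype.card W : ℝ) ^ 2) ^
          (Nat.card H.edgeSet)) ↔
    (∀ (W : Type) [Fintype W] [Nonempty W] (G : SimpleGraph W),
      (∀ v : W, (Nat.card (G.neighborSet v) : ℝ) ≤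
          4 * (Nat.card G.edgeSet : ℝ) / (Fintype.card W : ℝ)) →
      (Nat.card (H →g G) : ℝ) / (Fintype.card W : ℝ) ^ (Fintype.card VH) ≥
        (2 * (Nat.card G.edgeSet : ℝ) / (Fintype.card W : ℝ) ^ 2) ^
          (Nat.card H.edgeSet)) := by
  constructor
  · intro h W _ _ G _
    exact h W G
  · intro hyp W _ _ G
    rcases isEmpty_or_nonempty VH with hVH | hVH
    · -- VH empty : trivial
      have hm0 : Fintype.card VH = 0 := Fintype.card_eq_zero
      have he0 : Nat.card H.edgeSet = 0 := by
        haveI : IsEmpty H.edgeSet := ⟨fun e => by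
          obtain ⟨z, hz⟩ := e
          induction z using Sym2.ind with
          | _ x y => exact isEmptyElim x⟩
        exact Nat.card_of_isEmpty
      have hone : Nat.card (H →g G) = 1 := by
        haveI hne : Nonempty (H →g G) :=
          ⟨⟨fun a => isEmptyElim a, fun {a b} _ => isEmptyElim a⟩⟩
        haveI hss : Subsingleton (H →g G) :=
          ⟨fun f g => DFunLike.ext f g (fun a => isEmptyElim a)⟩
        exact Nat.card_eq_one_iff_unique.mpr ⟨hss, hne⟩
      rw [hm0, he0, hone]
      simp
    · -- VH nonempty
      have hme : Fintype.card VH ≤ 2 * Nat.card H.edgeSet := by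
        classical
        have h1 : ∀ v : VH, 1 ≤ nd H v := fun v => by
          obtain ⟨u, hu⟩ := hiso v
          exact nd_pos H hu
        calc Fintype.card VH = ∑ _v : VH, 1 := by simp
        _ ≤ ∑ v : VH, nd H v := Finset.sum_le_sum (fun v _ => h1 v)
        _ = 2 * Nat.card H.edgeSet := sum_nd H
      have hepos : 0 < Nat.card H.edgeSet := by
        obtain ⟨v⟩ := hVH
        obtain ⟨u, hu⟩ := hiso v
        haveI : Nonempty H.edgeSet := ⟨⟨s(v,u), H.mem_edgeSet.mpr hu⟩⟩
        exact Nat.card_pos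
      rcases Nat.eq_zero_or_pos (Nat.card G.edgeSet) with hE0 | hE1
      · -- no edges in G
        rw [hE0]
        norm_num
        rw [zero_pow (by rw [← Nat.card_coe_set_eq]; omega : H.edgeSet.ncard ≠ 0)]
        positivity
      · -- main case
        set m := Fintype.card VH with hm
        set e := Nat.card H.edgeSet with he
        set E := Nat.card G.edgeSet with hE
        set w := Fintype.card W with hw
        have hwpos : (0:ℝ) < (w:ℝ) := by exact_mod_cast Fintype.card_pos
        have main : ∀ k : ℕ, ((2*(E:ℝ))^e) ^ (k+1) ≤
            (2:ℝ)^(2*e-m) * (((Nat.card (H →g G) : ℝ)) * (w:ℝ)^(2*e-m)) ^ (k+1) := by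
          intro k
          have hEk : 1 ≤ Nat.card (tpow G k).edgeSet := by
            have hd := tpow_dart_card G k
            by_contra h0
            push_neg at h0
            have hz : Nat.card (tpow G k).edgeSet = 0 := by omega
            rw [hz, Nat.mul_zero] at hd
            have h2 : 2 * E = 0 := pow_eq_zero_iff (by omega) |>.mp hd.symm
            omega
          have key := lemA H hiso hme hyp (tpow G k) hEk
          rw [tpow_hom_card H G k] at key
          have hcast1 : (2 * (Nat.card (tpow G k).edgeSet : ℝ)) = (((2*E)^(k+1) : ℕ) : ℝ) := by
            exact_mod_cast congrArg (Nat.cast : ℕ → ℝ) (tpow_dart_card G k)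
          have hcard : Fintype.card (Fin (k+1) → W) = w^(k+1) := by
            simp [hw]
          rw [hcast1, hcard] at key
          push_cast at key
          calc ((2*(E:ℝ))^e) ^ (k+1) = ((2*(E:ℝ))^(k+1))^e := by ring
          _ ≤ ((Nat.card (H →g G) : ℝ))^(k+1) * (2 * ((w:ℝ))^(k+1))^(2*e-m) := key
          _ = (2:ℝ)^(2*e-m) * (((Nat.card (H →g G) : ℝ)) * (w:ℝ)^(2*e-m)) ^ (k+1) := by
            ring
        have hfin : (2*(E:ℝ))^e ≤ ((Nat.card (H →g G) : ℝ)) * (w:ℝ)^(2*e-m) :=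
          pow_limit (by positivity) (by positivity) main
        rw [ge_iff_le]
        have h1 : (2 * (E:ℝ) / (w:ℝ)^2)^e = (2*(E:ℝ))^e / (w:ℝ)^(2*e) := by
          rw [div_pow, ← pow_mul]
        rw [h1, div_le_div_iff₀ (by positivity) (by positivity)]
        have h2 : (w:ℝ)^(2*e) = (w:ℝ)^(2*e-m) * (w:ℝ)^m := by
          rw [← pow_add, Nat.sub_add_cancel hme]
        rw [h2, ← mul_assoc]
        exact mul_le_mul_of_nonneg_right hfin (by positivity)
end

section
/- Let U be an independent set of a bipartite graph H and T a tree on U such that for each u ∈ U, each component C of T\{u}, and the vertex u* ∈ C adjacent to u, the equality ⋃_{v∈C}(Λ_u ∩ Λ_v) = Λ_u ∩ Λ_{u*} holds. Then U is T-arrangeable, i.e., for every path P in T connecting u and v, Λ_u ∩ Λ_v = ⋂_{w∈P} Λ_w. -/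
/-- `U ⊆ V(H)` is `T`-arrangeable for a tree `T` on `U` if for every pair of
vertices `u, v ∈ U` and the path `P` in `T` connecting them,
`Λ_u ∩ Λ_v = ⋂_{w ∈ P} Λ_w`, where `Λ_x` is the neighborhood of `x` in `H`. -/
def Arrangeable {V : Type} (H : SimpleGraph V) (U : Set V)
    (T : SimpleGraph U) : Prop :=
  ∀ (u v : U) (p : T.Walk u v), p.IsPath →
    H.neighborSet ↑u ∩ H.neighborSet ↑v = ⋂ w ∈ p.support, H.neighborSet (↑w : V)

/-- The graph obtained from `T` by deleting the vertex `u` (removing all edges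
at `u`; the components of `T \ {u}` are the reachability classes avoiding `u`). -/
def deleteVert {α : Type} (T : SimpleGraph α) (u : α) : SimpleGraph α where
  Adj a b := T.Adj a b ∧ a ≠ u ∧ b ≠ u
  symm := by
    constructor
    rintro a b ⟨h, ha, hb⟩
    exact ⟨h.symm, hb, ha⟩
  loopless := by
    constructor
    rintro a ⟨h, -, -⟩
    exact T.ne_of_adj h rfl

lemma reachable_deleteVert {α : Type} {T : SimpleGraph α} {u a b : α}
    (p : T.Walk a b) (hu : u ∉ p.support) : (deleteVert T u).Reachable a b := by
  induction p with
  | nil => exact SimpleGraph.Reachable.refl _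
  | cons h q ih =>
      simp only [SimpleGraph.Walk.support_cons, List.mem_cons] at hu
      push_neg at hu
      have hadj : (deleteVert T u).Adj _ _ := ⟨h, Ne.symm hu.1,
        fun hb => hu.2 (hb ▸ q.start_mem_support)⟩
      exact hadj.reachable.trans (ih hu.2)

/-- conversely, if for each `u ∈ U`, each component `C` of
`T \ {u}` and the vertex `u* ∈ C` adjacent to `u` the equality
`⋃_{v ∈ C}(Λ_u ∩ Λ_v) = Λ_u ∩ Λ_{u*}` holds, then `U` is `T`-arrangeable. -/
theorem arrangeable_of_component_union (V : Type) (H : SimpleGraph V)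
    (hbip : H.Colorable 2)
    (U : Set V) (hindep : ∀ a ∈ U, ∀ b ∈ U, ¬H.Adj a b)
    (T : SimpleGraph U) (hT : T.IsTree)
    (hcomp : ∀ u ustar : U, T.Adj u ustar →
      ⋃ v ∈ {v : U | (deleteVert T u).Reachable ustar v},
          (H.neighborSet ↑u ∩ H.neighborSet (↑v : V)) =
        H.neighborSet ↑u ∩ H.neighborSet ↑ustar) :
    Arrangeable H U T := by
  intro u v p hp
  induction p with
  | nil => simp
  | @cons a b c h q ih =>
      have hq : q.IsPath := hp.of_cons
      have hha : a ∉ q.support := by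
        have := hp.support_nodup
        simp only [SimpleGraph.Walk.support_cons, List.nodup_cons] at this
        exact this.1
      have key : H.neighborSet (↑a : V) ∩ H.neighborSet ↑c ⊆
          H.neighborSet ↑a ∩ H.neighborSet ↑b := by
        rw [← hcomp a b h]
        intro x hx
        exact Set.mem_biUnion (reachable_deleteVert q hha) hx
      simp only [SimpleGraph.Walk.support_cons, List.mem_cons, Set.iInter_iInter_eq_or_left]
      rw [← ih hq]
      ext x
      constructor
      · rintro ⟨hxa, hxc⟩
        exact ⟨hxa, (key ⟨hxa, hxc⟩).2, hxc⟩
      · rintro ⟨hxa, _, hxc⟩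
        exact ⟨hxa, hxc⟩
end

section
/- Let H be a bipartite graph with bipartition A ∪ B containing vertices a_1, a_2 ∈ A such that every a ∈ A satisfies Λ_a ⊆ Λ_{a_1} or Λ_a ⊆ Λ_{a_2}. Then H is tree-arrangeable: the tree T on A with edge {a_1,a_2}, where each a ∈ A\{a_1,a_2} with Λ_a ⊆ Λ_{a_1} is a leaf attached to a_1 and the remaining vertices are leaves attached to a_2, makes A T-arrangeable. -/
/-- The "double star" with centers `a₁, a₂` joined by an edge, each remaining
vertex `x` being a leaf attached to its assigned center `c x`. -/
def doubleStar {α : Type} (a₁ a₂ : α) (c : α → α) : SimpleGraph α where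
  Adj x y := x ≠ y ∧ ((x = a₁ ∧ y = a₂) ∨ (x = a₂ ∧ y = a₁) ∨
    (y = c x ∧ x ≠ a₁ ∧ x ≠ a₂) ∨ (x = c y ∧ y ≠ a₁ ∧ y ≠ a₂))
  symm := by
    constructor
    rintro x y ⟨h, h2⟩
    refine ⟨h.symm, ?_⟩
    tauto
  loopless := by
    constructor
    rintro x ⟨h, -⟩
    exact h rfl

/-- let `H` be bipartite with bipartition `A ∪ B` containing
`a₁, a₂ ∈ A` such that every `a ∈ A` satisfies `Λ_a ⊆ Λ_{a₁}` or
`Λ_a ⊆ Λ_{a₂}`. Then `H` is tree-arrangeable: the tree `T` on `A` with edge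
`{a₁,a₂}`, in which each other `a ∈ A` is a leaf attached to a center `c a`
with `Λ_a ⊆ Λ_{c a}`, makes `A` `T`-arrangeable. -/
theorem arrangeable_doubleStar (V : Type) (H : SimpleGraph V) (A B : Set V)
    (hcover : ∀ v : V, v ∈ A ∨ v ∈ B) (hdisj : Disjoint A B)
    (hedges : ∀ u w : V, H.Adj u w → (u ∈ A ∧ w ∈ B) ∨ (u ∈ B ∧ w ∈ A))
    (a₁ a₂ : A) (hne : a₁ ≠ a₂)
    (hmax : ∀ a : A, H.neighborSet ↑a ⊆ H.neighborSet ↑a₁ ∨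
      H.neighborSet ↑a ⊆ H.neighborSet ↑a₂)
    (c : A → A)
    (hc : ∀ a : A, (c a = a₁ ∨ c a = a₂) ∧
      H.neighborSet ↑a ⊆ H.neighborSet ↑(c a)) :
    Arrangeable H A (doubleStar a₁ a₂ c) := by
  have nb : ∀ {p q : A}, p = q → H.neighborSet (p : V) = H.neighborSet (q : V) := by
    intro p q h; rw [h]
  -- a leaf (a vertex other than the centers) is adjacent only to its center
  have leafAdj : ∀ x y : A, x ≠ a₁ → x ≠ a₂ → (doubleStar a₁ a₂ c).Adj x y → y = c x := by
    rintro x y hx1 hx2 ⟨hxy, hcase⟩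
    rcases hcase with ⟨h1, -⟩ | ⟨h2, -⟩ | ⟨h, -, -⟩ | ⟨hxc, hy1, hy2⟩
    · exact absurd h1 hx1
    · exact absurd h2 hx2
    · exact h
    · rcases (hc y).1 with h | h
      · exact absurd (hxc.trans h) hx1
      · exact absurd (hxc.trans h) hx2
  intro u v p
  induction p with
  | nil =>
    intro _
    ext z
    simp
  | @cons x y v h q ih =>
    intro hp
    rw [SimpleGraph.Walk.cons_isPath_iff] at hp
    obtain ⟨hqp, hxq⟩ := hp
    -- The key fact: Λ_x ∩ Λ_v ⊆ Λ_y.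
    have key : H.neighborSet ↑x ∩ H.neighborSet ↑v ⊆ H.neighborSet ↑y := by
      obtain ⟨hxy, hcase⟩ := h
      rcases hcase with ⟨hx1, hy2⟩ | ⟨hx2, hy1⟩ | ⟨hycx, -, -⟩ | ⟨hxcy, hy1, hy2⟩
      · -- x = a₁, y = a₂
        revert hqp hxq
        cases q with
        | nil => exact fun _ _ => Set.inter_subset_right
        | @cons _ z _ h2 q2 =>
          intro hqp hxq
          rw [SimpleGraph.Walk.cons_isPath_iff] at hqp
          obtain ⟨hq2p, hyq2⟩ := hqp
          have hxz : x ∉ q2.support := fun hm => hxq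
            (by rw [SimpleGraph.Walk.support_cons]; exact List.mem_cons_of_mem _ hm)
          obtain ⟨hyz, hcase2⟩ := h2
          rcases hcase2 with ⟨h21, -⟩ | ⟨-, h22⟩ | ⟨-, -, h23⟩ | ⟨h24, hz1, hz2⟩
          · exact absurd (hx1.trans h21.symm) hxy
          · exact (hxz (by rw [hx1.trans h22.symm]; exact SimpleGraph.Walk.start_mem_support q2)).elim
          · exact absurd hy2 h23
          · revert hq2p hyq2 hxz
            cases q2 with
            | nil =>
              intro _ _ _ w hw
              have hwz := (hc v).2 hw.2
              rwa [← nb h24] at hwz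
            | @cons _ w' _ h3 q3 =>
              intro _ hyq2 _
              exfalso
              have hw' : w' = c z := leafAdj z w' hz1 hz2 h3
              apply hyq2
              rw [h24.trans hw'.symm, SimpleGraph.Walk.support_cons]
              exact List.mem_cons_of_mem _ (SimpleGraph.Walk.start_mem_support q3)
      · -- x = a₂, y = a₁
        revert hqp hxq
        cases q with
        | nil => exact fun _ _ => Set.inter_subset_right
        | @cons _ z _ h2 q2 =>
          intro hqp hxq
          rw [SimpleGraph.Walk.cons_isPath_iff] at hqp
          obtain ⟨hq2p, hyq2⟩ := hqp
          have hxz : x ∉ q2.support := fun hm => hxq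
            (by rw [SimpleGraph.Walk.support_cons]; exact List.mem_cons_of_mem _ hm)
          obtain ⟨hyz, hcase2⟩ := h2
          rcases hcase2 with ⟨-, h22⟩ | ⟨h21, -⟩ | ⟨-, h23, -⟩ | ⟨h24, hz1, hz2⟩
          · exact (hxz (by rw [hx2.trans h22.symm]; exact SimpleGraph.Walk.start_mem_support q2)).elim
          · exact absurd (hx2.trans h21.symm) hxy
          · exact absurd hy1 h23
          · revert hq2p hyq2 hxz
            cases q2 with
            | nil =>
              intro _ _ _ w hw
              have hwz := (hc v).2 hw.2
              rwa [← nb h24] at hwz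
            | @cons _ w' _ h3 q3 =>
              intro _ hyq2 _
              exfalso
              have hw' : w' = c z := leafAdj z w' hz1 hz2 h3
              apply hyq2
              rw [h24.trans hw'.symm, SimpleGraph.Walk.support_cons]
              exact List.mem_cons_of_mem _ (SimpleGraph.Walk.start_mem_support q3)
      · -- y = c x : x is a leaf attached to its center
        intro w hw
        have hwx := (hc x).2 hw.1
        rwa [← nb hycx] at hwx
      · -- x = c y : y is a leaf, so the walk must end at y
        revert hqp hxq
        cases q with
        | nil => exact fun _ _ => Set.inter_subset_right
        | @cons _ z _ h2 q2 =>
          intro hqp hxq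
          exfalso
          have hz : z = c y := leafAdj y z hy1 hy2 h2
          apply hxq
          rw [SimpleGraph.Walk.support_cons, hxcy.trans hz.symm]
          exact List.mem_cons_of_mem _ (SimpleGraph.Walk.start_mem_support q2)
    have hrec := ih hqp
    ext z
    simp only [Set.mem_inter_iff, SimpleGraph.Walk.support_cons, List.mem_cons,
      Set.mem_iInter]
    constructor
    · rintro ⟨hzx, hzv⟩ w hw
      rcases hw with rfl | hw
      · exact hzx
      · have hzy : z ∈ H.neighborSet (y : V) := key ⟨hzx, hzv⟩
        have : z ∈ ⋂ w ∈ q.support, H.neighborSet (w : V) := hrec ▸ ⟨hzy, hzv⟩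
        simpa using Set.mem_iInter₂.mp this w hw
    · intro hz
      exact ⟨by simpa using hz (↑x) (Or.inl rfl),
        by simpa using hz (↑v) (Or.inr (SimpleGraph.Walk.end_mem_support q))⟩
end
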